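/- Let S be a k-additive algebra on (X,G) admissible with respect to a k-small system {N_α}_{α<k}, and let N_∞ = ⋂_{α<k} N_α. Let S̃ be the k-additive algebra generated by S and N_∞, whose elements have the form (A∖Y)∪Z with A ∈ S and Y, Z ∈ N_∞. Then the k-additive measurable structure (S̃, N_∞) is k⁺-saturated: every family of pairwise disjoint sets in S̃∖N_∞ has cardinality at most k. -/

import Mathlib

open Set Cardinal Pointwise

universe u

variable {X : Type u}

/-- A class of sets is `k`-additive if it is closed under unions of at most `k` of its members. -/
def KAdd (k : Cardinal.{u}) (C : Set (Set X)) : Prop :=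
  ∀ 𝒜 : Set (Set X), 𝒜 ⊆ C → #𝒜 ≤ k → ⋃₀ 𝒜 ∈ C

/-- An ideal of subsets of `X`. -/
def IsIdeal (J : Set (Set X)) : Prop :=
  ∅ ∈ J ∧ (∀ A B : Set X, B ∈ J → A ⊆ B → A ∈ J) ∧
    (∀ A B : Set X, A ∈ J → B ∈ J → A ∪ B ∈ J)

/-- An algebra of subsets of `X`. -/
def IsAlg (S : Set (Set X)) : Prop :=
  Set.univ ∈ S ∧ (∀ A ∈ S, Aᶜ ∈ S) ∧ (∀ A ∈ S, ∀ B ∈ S, A ∪ B ∈ S)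

/-- A `G`-invariant class of sets. -/
def Invar (G : Type u) [Group G] [MulAction G X] (C : Set (Set X)) : Prop :=
  ∀ (g : G), ∀ A ∈ C, g • A ∈ C

/-- `N∞`: the intersection of the members of a `k`-small system. -/
def Ninf (k : Cardinal.{u}) (N : Ordinal.{u} → Set (Set X)) : Set (Set X) :=
  {A | ∀ α < k.ord, A ∈ N α}

/-- A `k`-small system on `(X, G)` (Definition 2.6). -/
def IsSmallSystem (G : Type u) [Group G] [MulAction G X]
    (k : Cardinal.{u}) (N : Ordinal.{u} → Set (Set X)) : Prop :=
  (∀ α < k.ord, ∅ ∈ N α) ∧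
  (∀ α < k.ord, Invar G (N α)) ∧
  (∀ α < k.ord, ∀ E ∈ N α, ∀ F, F ⊆ E → F ∈ N α) ∧
  (∀ α < k.ord, ∀ E ∈ N α, ∀ F ∈ Ninf k N, E ∪ F ∈ N α) ∧
  (∀ α < k.ord, ∃ αs, α < αs ∧ αs < k.ord ∧
    ∀ E : Ordinal.{u} → Set X, (∀ β, αs < β → β < k.ord → E β ∈ N β) →
      (⋃ β ∈ {β | αs < β ∧ β < k.ord}, E β) ∈ N α) ∧
  (∀ α < k.ord, ∀ β < k.ord, ∃ γ < k.ord, α < γ ∧ β < γ ∧ N γ ⊆ N α ∧ N γ ⊆ N β)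

/-- Admissibility of a `k`-additive algebra `S` with respect to a
`k`-small system (Definition 2.7). -/
def Admissible (k : Cardinal.{u}) (S : Set (Set X))
    (N : Ordinal.{u} → Set (Set X)) : Prop :=
  (∃ α < k.ord, (S \ N α).Nonempty) ∧
  (∀ α < k.ord, (S ∩ N α).Nonempty) ∧
  (∀ α < k.ord, ∀ E ∈ N α, ∃ F ∈ N α ∩ S, E ⊆ F) ∧
  (∀ α < k.ord, ∀ D : Set (Set X), D ⊆ S → (∀ B ∈ D, B ∉ N α) →
    D.PairwiseDisjoint id → #D ≤ k)

/-- The `k`-additive algebra generated by `S` and an ideal `Nf`: its members are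
the sets of the form `(A \ Y) ∪ Z` with `A ∈ S` and `Y, Z ∈ Nf`. -/
def Stilde (S Nf : Set (Set X)) : Set (Set X) :=
  {B | ∃ A ∈ S, ∃ Y ∈ Nf, ∃ Z ∈ Nf, B = (A \ Y) ∪ Z}

/-- A set `E` is `(S, J)`-thick if every `B ∈ S` with `B ⊆ X \ E` lies in `J`. -/
def Thick (S J : Set (Set X)) (E : Set X) : Prop :=
  ∀ B ∈ S, B ⊆ Eᶜ → B ∈ J

/-- Theorem 2.8: if `S` is admissible with respect to the `k`-small
system `{N_α}`, then the `k`-additive measurable structure `(S̃, N∞)` is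
`k⁺`-saturated: every pairwise disjoint family in `S̃ \ N∞` has cardinality at most `k`. -/
theorem stmt_4 {G : Type u} [Group G] [MulAction G X]
    (k : Cardinal.{u}) (hk : ℵ₀ ≤ k)
    (S : Set (Set X)) (hS : IsAlg S) (hSadd : KAdd k S) (hSinv : Invar G S)
    (N : Ordinal.{u} → Set (Set X)) (hN : IsSmallSystem G k N)
    (hadm : Admissible k S N) :
    ∀ D : Set (Set X), D ⊆ Stilde S (Ninf k N) → (∀ B ∈ D, B ∉ Ninf k N) →
      D.PairwiseDisjoint id → #D ≤ k := by
  classical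
  obtain ⟨hN0, hNinv, hNher, hNun, hNreg, hNdir⟩ := hN
  obtain ⟨-, -, hbase, hsat⟩ := hadm
  have hlim : Order.IsSuccLimit (Cardinal.ord k) := Cardinal.isSuccLimit_ord hk
  -- if two sets are in `N γ` for a suitable `γ`, any subset of their union is in `N α`
  have pair : ∀ α < k.ord, ∃ γ < k.ord, ∀ C F A : Set X,
      C ∈ N γ → F ∈ N γ → A ⊆ C ∪ F → A ∈ N α := by
    intro α hα
    obtain ⟨αs, hααs, hαs, hreg⟩ := hNreg α hα
    have hβ1 : αs + 1 < k.ord := by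
      rw [Ordinal.add_one_eq_succ]; exact hlim.succ_lt hαs
    have hβ2 : αs + 1 + 1 < k.ord := by
      rw [Ordinal.add_one_eq_succ]; exact hlim.succ_lt hβ1
    obtain ⟨γ, hγ, -, -, hsub1, hsub2⟩ := hNdir (αs + 1) hβ1 (αs + 1 + 1) hβ2
    refine ⟨γ, hγ, fun C F A hC hF hA => ?_⟩
    have hne12 : αs + 1 ≠ αs + 1 + 1 := by
      intro h
      have : αs + 1 < αs + 1 + 1 := by
        rw [Ordinal.add_one_eq_succ (αs+1)]; exact Order.lt_succ _
      exact absurd h this.ne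
    set E : Ordinal.{u} → Set X :=
      fun β => if β = αs + 1 then C else if β = αs + 1 + 1 then F else ∅ with hE
    have hmem : (⋃ β ∈ {β | αs < β ∧ β < k.ord}, E β) ∈ N α := by
      apply hreg
      intro β h1 h2
      rw [hE]
      dsimp only
      split_ifs with e1 e2
      · subst e1; exact hsub1 hC
      · subst e2; exact hsub2 hF
      · exact hN0 β h2
    have hm1 : αs + 1 ∈ {β | αs < β ∧ β < k.ord} := by
      refine ⟨?_, hβ1⟩
      rw [Ordinal.add_one_eq_succ]; exact Order.lt_succ _
    have hm2 : αs + 1 + 1 ∈ {β | αs < β ∧ β < k.ord} := by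
      refine ⟨?_, hβ2⟩
      have h1 : αs < αs + 1 := by rw [Ordinal.add_one_eq_succ]; exact Order.lt_succ _
      have h2 : αs + 1 < αs + 1 + 1 := by
        rw [Ordinal.add_one_eq_succ (αs+1)]; exact Order.lt_succ _
      exact h1.trans h2
    have hsubun : C ∪ F ⊆ ⋃ β ∈ {β | αs < β ∧ β < k.ord}, E β := by
      apply union_subset
      · have hCE : C = E (αs + 1) := by
          rw [hE]; dsimp only; rw [if_pos rfl]
        rw [hCE]; exact subset_biUnion_of_mem hm1
      · have hFE : F = E (αs + 1 + 1) := by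
          rw [hE]
          dsimp only
          split_ifs with e1 e2
          · exact absurd e1.symm hne12
          · rfl
          · exact absurd rfl e2
        rw [hFE]; exact subset_biUnion_of_mem hm2
    exact hNher α hα _ hmem A (hA.trans hsubun)
  intro D hD hDnot hDdisj
  -- produce, for each `B ∈ D`, an index `γ` and a subset `C ∈ S \ N γ` of `B`
  have key : ∀ B : D, ∃ γ, γ < k.ord ∧ ∃ C, C ∈ S ∧ C ⊆ (B : Set X) ∧ C ∉ N γ := by
    rintro ⟨B, hB⟩
    obtain ⟨A, hA, Y, hY, Z, hZ, hBeq⟩ := hD hB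
    have hAN : ∃ α, α < k.ord ∧ A ∉ N α := by
      by_contra h
      push_neg at h
      apply hDnot B hB
      intro α hα
      have hAα : A ∪ Z ∈ N α := hNun α hα A (h α hα) Z hZ
      refine hNher α hα _ hAα B ?_
      rw [hBeq]
      exact union_subset (diff_subset.trans subset_union_left) subset_union_right
    obtain ⟨α, hα, hAn⟩ := hAN
    obtain ⟨γ, hγ, hpair⟩ := pair α hα
    obtain ⟨F, ⟨hFN, hFS⟩, hYF⟩ := hbase γ hγ Y (hY γ hγ)
    refine ⟨γ, hγ, A \ F, ?_, ?_, ?_⟩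
    · have h1 : Aᶜ ∈ S := hS.2.1 A hA
      have h2 : Aᶜ ∪ F ∈ S := hS.2.2 _ h1 _ hFS
      have h3 : (Aᶜ ∪ F)ᶜ ∈ S := hS.2.1 _ h2
      have heq : A \ F = (Aᶜ ∪ F)ᶜ := by
        rw [compl_union, compl_compl]; rfl
      rwa [heq]
    · show A \ F ⊆ B
      rw [hBeq]
      exact subset_union_of_subset_left (diff_subset_diff_right hYF) Z
    · intro hCF
      refine hAn (hpair (A \ F) F A hCF hFN ?_)
      intro x hx
      by_cases hF' : x ∈ F
      · exact Or.inr hF'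
      · exact Or.inl ⟨hx, hF'⟩
  choose γf hγf Cf hCfS hCfB hCfN using key
  -- map each `B ∈ D` to its index, realized in the type `k.ord.toType`
  let f : D → (Cardinal.ord k).ToType :=
    fun B => Ordinal.ToType.mk (o := Cardinal.ord k) ⟨γf B, hγf B⟩
  have hfiber : ∀ y : (Cardinal.ord k).ToType, #(f ⁻¹' {y}) ≤ k := by
    intro y
    set ι : Ordinal.{u} := ((Ordinal.ToType.mk (o := Cardinal.ord k)).symm y).1 with hι
    have hιlt : ι < k.ord := ((Ordinal.ToType.mk (o := Cardinal.ord k)).symm y).2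
    have hfib : ∀ B : D, f B = y ↔ γf B = ι := by
      intro B
      constructor
      · intro h
        have := congrArg (fun z => ((Ordinal.ToType.mk (o := Cardinal.ord k)).symm z).1) h
        simpa [f] using this
      · intro h
        have : (⟨γf B, hγf B⟩ : Set.Iio (Cardinal.ord k)) =
            (Ordinal.ToType.mk (o := Cardinal.ord k)).symm y := Subtype.ext h
        simp only [f, this, OrderIso.apply_symm_apply]
    set D' : Set (Set X) := {s | ∃ B : D, f B = y ∧ Cf B = s} with hD'
    have hD'k : #D' ≤ k := by
      refine hsat ι hιlt D' ?_ ?_ ?_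
      · rintro s ⟨B, -, rfl⟩; exact hCfS B
      · rintro s ⟨B, hBy, rfl⟩
        rw [← (hfib B).1 hBy]
        exact hCfN B
      · rintro s ⟨B1, -, rfl⟩ t ⟨B2, -, rfl⟩ hst
        have hB12 : (B1 : Set X) ≠ (B2 : Set X) := by
          intro h; exact hst (congrArg Cf (Subtype.ext h))
        have hd : Disjoint (B1 : Set X) (B2 : Set X) := hDdisj B1.2 B2.2 hB12
        exact hd.mono (hCfB B1) (hCfB B2)
    have hinj : Function.Injective
        (fun B : f ⁻¹' {y} => (⟨Cf B.1, ⟨B.1, B.2, rfl⟩⟩ : D')) := by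
      intro B1 B2 h
      have hCC : Cf B1.1 = Cf B2.1 := congrArg Subtype.val h
      by_contra hne
      have hBne : B1.1 ≠ B2.1 := fun h' => hne (Subtype.ext h')
      have hB12 : (B1.1 : Set X) ≠ (B2.1 : Set X) := fun h' => hBne (Subtype.ext h')
      have hd : Disjoint (B1.1 : Set X) (B2.1 : Set X) := hDdisj B1.1.2 B2.1.2 hB12
      have hdd : Disjoint (Cf B1.1) (Cf B1.1) := by
        nth_rewrite 2 [hCC]
        exact hd.mono (hCfB B1.1) (hCfB B2.1)
      have hempty : Cf B1.1 = ∅ := disjoint_self.mp hdd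
      have : Cf B1.1 ∈ N (γf B1.1) := by rw [hempty]; exact hN0 _ (hγf B1.1)
      exact hCfN B1.1 this
    have h1 : #(f ⁻¹' {y}) ≤ #D' := Cardinal.mk_le_of_injective hinj
    exact h1.trans hD'k
  have hmain : #D ≤ #((Cardinal.ord k).ToType) * k :=
    Cardinal.mk_le_mk_mul_of_mk_preimage_le f hfiber
  rwa [Cardinal.mk_toType, Cardinal.card_ord, Cardinal.mul_eq_self hk] at hmain
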